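/- For a bounded polyhedral region P in M_ℝ ≅ ℝ^n (an intersection of finitely many closed and open rational half-spaces), the limit as m → ∞ of #(mP ∩ M) / (m^n / n!) exists and equals n! times the Euclidean volume of P (i.e., the volume normalized so the smallest lattice simplex has unit volume). -/

import Mathlib

open Filter Topology MeasureTheory Pointwise

/-- For a bounded polyhedral region `P ⊆ ℝ^n` cut out by finitely many
closed and open rational half-spaces (closedness recorded by the complement of `S`),
the limit of `#(mP ∩ ℤ^n) / (m^n / n!)` as `m → ∞` exists and equals `n!` times the
Euclidean volume of `P`. -/
lemma hyperplane_null (n : ℕ) (w : Fin n → ℤ) (hw : w ≠ 0) (c : ℝ) :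
    volume {u : Fin n → ℝ | ∑ j, u j * (w j : ℝ) = c} = 0 := by
  classical
  set f : (Fin n → ℝ) →ₗ[ℝ] ℝ := ∑ j, (w j : ℝ) • LinearMap.proj j with hf
  have hfapp : ∀ u : Fin n → ℝ, f u = ∑ j, u j * (w j : ℝ) := by
    intro u
    simp [hf, LinearMap.sum_apply, LinearMap.smul_apply, LinearMap.proj_apply, mul_comm]
  obtain ⟨j0, hj0⟩ : ∃ j, w j ≠ 0 := by
    by_contra h
    push_neg at h
    exact hw (funext h)
  have hvj0 : ((w j0 : ℝ)) ≠ 0 := Int.cast_ne_zero.mpr hj0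
  have hsingle : f (Pi.single j0 1) = (w j0 : ℝ) := by
    rw [hfapp]
    simp [Pi.single_apply]
  have hker : LinearMap.ker f ≠ ⊤ := by
    intro h
    have : f (Pi.single j0 1) = 0 := by
      have : Pi.single j0 (1:ℝ) ∈ LinearMap.ker f := by rw [h]; trivial
      simpa [LinearMap.mem_ker] using this
    rw [hsingle] at this
    exact hvj0 this
  set u0 : Fin n → ℝ := (c / (w j0 : ℝ)) • (Pi.single j0 1 : Fin n → ℝ) with hu0
  have hfu0 : f u0 = c := by
    rw [hu0, _root_.map_smul, hsingle, smul_eq_mul, div_mul_cancel₀ _ hvj0]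
  have hset : {u : Fin n → ℝ | ∑ j, u j * (w j : ℝ) = c}
      = (fun x => x + (-u0)) ⁻¹' (LinearMap.ker f : Set (Fin n → ℝ)) := by
    ext x
    simp only [Set.mem_setOf_eq, Set.mem_preimage, SetLike.mem_coe, LinearMap.mem_ker,
      map_add, map_neg, hfu0, ← hfapp]
    constructor
    · intro h; rw [h]; ring
    · intro h; linarith
  rw [hset, measure_preimage_add_right]
  exact Measure.addHaar_submodule volume _ hker

lemma count_tendsto (n : ℕ) (P : Set (Fin n → ℝ)) (hmeas : MeasurableSet P)
    (hbdd : Bornology.IsBounded P) (hfr : volume (frontier P) = 0) :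
    Tendsto (fun m : ℕ =>
        (Nat.card {u : Fin n → ℤ | (fun j => (u j : ℝ)) ∈ (m : ℝ) • P} : ℝ) / (m : ℝ) ^ n)
      atTop (𝓝 (volume P).toReal) := by
  classical
  obtain ⟨R, hR0, hR⟩ := hbdd.subset_closedBall_lt 0 0
  -- the sets
  set T : ℕ → Set (Fin n → ℤ) := fun m => {u | (fun j => (u j : ℝ)) ∈ (m : ℝ) • P} with hT
  set cube : ℕ → (Fin n → ℤ) → Set (Fin n → ℝ) :=
    fun m u => {x | ∀ j, ⌊(m : ℝ) * x j⌋ = u j} with hcube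
  set Q : ℕ → Set (Fin n → ℝ) :=
    fun m => {x | (fun j => ((⌊(m : ℝ) * x j⌋ : ℤ) : ℝ)) ∈ (m : ℝ) • P} with hQ
  have cube_pi : ∀ m u, cube m u = Set.pi Set.univ (fun j => {t : ℝ | ⌊(m : ℝ) * t⌋ = u j}) := by
    intro m u; ext x; simp [hcube, Set.mem_pi]
  have factor_meas : ∀ (m : ℕ) (a : ℤ), MeasurableSet {t : ℝ | ⌊(m : ℝ) * t⌋ = a} := by
    intro m a
    exact (Int.measurable_floor.comp (measurable_const.mul measurable_id)) (MeasurableSet.singleton a)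
  have cube_meas : ∀ m u, MeasurableSet (cube m u) := by
    intro m u
    rw [cube_pi]
    exact MeasurableSet.univ_pi (fun j => factor_meas m (u j))
  have Q_union : ∀ m, Q m = ⋃ u : T m, cube m u := by
    intro m; ext x
    simp only [hQ, Set.mem_setOf_eq, Set.mem_iUnion]
    constructor
    · intro hx
      exact ⟨⟨fun j => ⌊(m : ℝ) * x j⌋, hx⟩, fun j => rfl⟩
    · rintro ⟨⟨u, hu⟩, hx⟩
      have : (fun j => ((⌊(m : ℝ) * x j⌋ : ℤ) : ℝ)) = fun j => (u j : ℝ) := by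
        funext j; rw [hx j]
      rw [this]; exact hu
  have Q_meas : ∀ m, MeasurableSet (Q m) := by
    intro m
    rw [Q_union]
    exact MeasurableSet.iUnion (fun u => cube_meas m u)
  -- pointwise facts for m ≥ 1
  have memQ : ∀ (m : ℕ), 1 ≤ m → ∀ x : Fin n → ℝ,
      (x ∈ Q m ↔ (fun j => ((⌊(m : ℝ) * x j⌋ : ℤ) : ℝ) / m) ∈ P) := by
    intro m hm x
    have hm0 : ((m : ℝ)) ≠ 0 := Nat.cast_ne_zero.mpr (by omega)
    rw [hQ]
    simp only [Set.mem_setOf_eq]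
    rw [Set.mem_smul_set_iff_inv_smul_mem₀ hm0]
    constructor <;> intro h <;> [skip; skip] <;>
      · convert h using 1
        funext j
        simp [Pi.smul_apply, smul_eq_mul, div_eq_inv_mul]
  have dist_floor : ∀ (m : ℕ), 1 ≤ m → ∀ x : Fin n → ℝ,
      dist (fun j => ((⌊(m : ℝ) * x j⌋ : ℤ) : ℝ) / m) x ≤ 1 / m := by
    intro m hm x
    have hm0 : (0 : ℝ) < m := by exact_mod_cast Nat.pos_of_ne_zero (by omega)
    rw [dist_pi_le_iff (by positivity)]
    intro j
    have h1 := Int.floor_le ((m : ℝ) * x j)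
    have h2 := Int.lt_floor_add_one ((m : ℝ) * x j)
    have key : ((⌊(m : ℝ) * x j⌋ : ℤ) : ℝ) / m - x j
        = (((⌊(m : ℝ) * x j⌋ : ℤ) : ℝ) - m * x j) / m := by field_simp
    rw [Real.dist_eq, key, abs_div, abs_of_pos hm0]
    gcongr
    rw [abs_le]
    constructor <;> linarith
  have floor_tendsto : ∀ x : Fin n → ℝ,
      Tendsto (fun m : ℕ => (fun j => ((⌊(m : ℝ) * x j⌋ : ℤ) : ℝ) / m)) atTop (𝓝 x) := by
    intro x
    rw [tendsto_iff_dist_tendsto_zero]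
    apply squeeze_zero' (Eventually.of_forall fun m => dist_nonneg)
      (by filter_upwards [eventually_ge_atTop 1] with m hm using dist_floor m hm x)
    exact tendsto_one_div_atTop_nhds_zero_nat
  -- a.e. convergence of indicators
  have h_lim : ∀ᵐ x : Fin n → ℝ, ∀ᶠ m : ℕ in atTop, x ∈ Q m ↔ x ∈ P := by
    have hae : ∀ᵐ x : Fin n → ℝ, x ∉ frontier P := by
      rw [ae_iff]
      simpa [not_not] using hfr
    filter_upwards [hae] with x hx
    by_cases hxi : x ∈ interior P
    · have hev : ∀ᶠ m : ℕ in atTop,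
          (fun j => ((⌊(m : ℝ) * x j⌋ : ℤ) : ℝ) / m) ∈ interior P :=
        (floor_tendsto x).eventually (isOpen_interior.eventually_mem hxi)
      filter_upwards [hev, eventually_ge_atTop 1] with m hm hm1
      simp only [memQ m hm1 x]
      exact iff_of_true (interior_subset hm) (interior_subset hxi)
    · have hxc : x ∉ closure P := by
        intro hc
        exact hx ⟨hc, hxi⟩
      have hev : ∀ᶠ m : ℕ in atTop,
          (fun j => ((⌊(m : ℝ) * x j⌋ : ℤ) : ℝ) / m) ∈ (closure P)ᶜ :=
        (floor_tendsto x).eventually (isOpen_compl_iff.mpr isClosed_closure |>.eventually_mem hxc)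
      filter_upwards [hev, eventually_ge_atTop 1] with m hm hm1
      simp only [memQ m hm1 x]
      exact iff_of_false (fun h => hm (subset_closure h)) (fun h => hxc (subset_closure h))
  -- domination
  have As_le_B : ∀ᶠ m : ℕ in atTop, Q m ⊆ Metric.closedBall 0 (R + 1) := by
    filter_upwards [eventually_ge_atTop 1] with m hm x hx
    have hm0 : (0 : ℝ) < m := by exact_mod_cast Nat.pos_of_ne_zero (by omega)
    have h1 : (fun j => ((⌊(m : ℝ) * x j⌋ : ℤ) : ℝ) / m) ∈ P := (memQ m hm x).1 hx
    have h2 : dist (fun j => ((⌊(m : ℝ) * x j⌋ : ℤ) : ℝ) / m) (0 : Fin n → ℝ) ≤ R :=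
      Metric.mem_closedBall.1 (hR h1)
    have h3 := dist_floor m hm x
    have h4 : (1 : ℝ) / m ≤ 1 := by
      rw [div_le_one hm0]; exact_mod_cast hm
    rw [Metric.mem_closedBall]
    calc dist x (0 : Fin n → ℝ)
        ≤ dist x (fun j => ((⌊(m : ℝ) * x j⌋ : ℤ) : ℝ) / m)
          + dist (fun j => ((⌊(m : ℝ) * x j⌋ : ℤ) : ℝ) / m) (0 : Fin n → ℝ) := dist_triangle _ _ _
      _ ≤ 1 / m + R := by rw [dist_comm] at h3; exact add_le_add h3 h2
      _ ≤ R + 1 := by linarith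
  have hPfin : volume P ≠ ⊤ :=
    ne_top_of_le_ne_top ((isCompact_closedBall _ _).measure_lt_top).ne (measure_mono hR)
  have hvol : Tendsto (fun m => volume (Q m)) atTop (𝓝 (volume P)) :=
    MeasureTheory.tendsto_measure_of_ae_tendsto_indicator atTop hmeas Q_meas
      measurableSet_closedBall ((isCompact_closedBall _ _).measure_lt_top).ne
      As_le_B h_lim
  have hvolR : Tendsto (fun m => (volume (Q m)).toReal) atTop (𝓝 (volume P).toReal) :=
    (ENNReal.tendsto_toReal hPfin).comp hvol
  -- identify (volume (Q m)).toReal with the count, for m ≥ 1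
  refine hvolR.congr' ?_
  filter_upwards [eventually_ge_atTop 1] with m hm
  have hm0 : (0 : ℝ) < m := by exact_mod_cast Nat.pos_of_ne_zero (by omega)
  -- T m is finite
  have hTfin : (T m).Finite := by
    have hsub : T m ⊆ Set.pi Set.univ
        (fun _ : Fin n => Set.Icc (-⌈(m : ℝ) * R⌉) ⌈(m : ℝ) * R⌉) := by
      intro u hu
      have h1 : (fun j => ((m : ℝ))⁻¹ • ((u j : ℝ))) ∈ P := by
        have := (Set.mem_smul_set_iff_inv_smul_mem₀ (ne_of_gt hm0) _ _).1 hu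
        convert this using 1
        rfl
      have h2 : dist (fun j => ((m : ℝ))⁻¹ • ((u j : ℝ))) (0 : Fin n → ℝ) ≤ R :=
        Metric.mem_closedBall.1 (hR h1)
      intro j _
      have h3 : dist (((m : ℝ))⁻¹ • ((u j : ℝ))) (0 : ℝ) ≤ R :=
        le_trans (dist_le_pi_dist (fun j => ((m : ℝ))⁻¹ • ((u j : ℝ))) (0 : Fin n → ℝ) j) h2
      rw [Real.dist_eq, sub_zero, smul_eq_mul, abs_mul, abs_of_pos (inv_pos.mpr hm0)] at h3
      have h5 : |(u j : ℝ)| ≤ m * R := by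
        calc |(u j : ℝ)| = (m : ℝ) * ((m : ℝ)⁻¹ * |(u j : ℝ)|) := by field_simp
          _ ≤ (m : ℝ) * R := mul_le_mul_of_nonneg_left h3 hm0.le
      rw [abs_le] at h5
      constructor
      · have : (-(⌈(m : ℝ) * R⌉ : ℝ)) ≤ (u j : ℝ) := le_trans (by
          simpa using neg_le_neg (Int.le_ceil ((m : ℝ) * R))) h5.1
        exact_mod_cast this
      · have : (u j : ℝ) ≤ (⌈(m : ℝ) * R⌉ : ℝ) := le_trans h5.2 (Int.le_ceil _)
        exact_mod_cast this
    exact (Set.Finite.pi (fun _ => Set.finite_Icc _ _)).subset hsub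
  haveI : Fintype (T m) := hTfin.fintype
  -- volume of each cube
  have cube_vol : ∀ u : Fin n → ℤ, volume (cube m u) = ENNReal.ofReal (1 / m) ^ n := by
    intro u
    have factor_eq : ∀ a : ℤ, {t : ℝ | ⌊(m : ℝ) * t⌋ = a}
        = Set.Ico ((a : ℝ) / m) (((a : ℝ) + 1) / m) := by
      intro a
      ext t
      rw [Set.mem_setOf_eq, Int.floor_eq_iff, Set.mem_Ico, div_le_iff₀ hm0, lt_div_iff₀ hm0]
      constructor <;> intro h <;> constructor <;> linarith [h.1, h.2]
    rw [cube_pi]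
    rw [volume_pi_pi]
    have : ∀ j : Fin n, volume {t : ℝ | ⌊(m : ℝ) * t⌋ = u j} = ENNReal.ofReal (1 / m) := by
      intro j
      rw [factor_eq, Real.volume_Ico]
      congr 1
      field_simp
      ring
    simp_rw [this]
    rw [Finset.prod_const, Finset.card_univ, Fintype.card_fin]
  -- disjointness
  have hdisj : Pairwise (Function.onFun Disjoint (fun u : T m => cube m (u : Fin n → ℤ))) := by
    rintro ⟨u, hu⟩ ⟨u', hu'⟩ hne
    simp only [Function.onFun]
    rw [Set.disjoint_left]
    intro x hx hx'
    exact hne (Subtype.ext (funext fun j => (hx j).symm.trans (hx' j)))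
  have hQvol : volume (Q m) = (Nat.card (T m)) • ENNReal.ofReal (1 / m) ^ n := by
    rw [Q_union, measure_iUnion hdisj (fun u => cube_meas m u)]
    simp_rw [cube_vol]
    rw [tsum_fintype, Finset.sum_const, Finset.card_univ, Nat.card_eq_fintype_card]
  rw [hQvol]
  rw [nsmul_eq_mul, ENNReal.toReal_mul, ENNReal.toReal_natCast, ENNReal.toReal_pow,
    ENNReal.toReal_ofReal (by positivity)]
  show (Nat.card (T m) : ℝ) * (1 / (m : ℝ)) ^ n = (Nat.card (T m) : ℝ) / (m : ℝ) ^ n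
  rw [div_pow, one_pow]
  ring

theorem lattice_points_asymptotics_eq_normalized_volume
    (n r : ℕ) (v : Fin r → Fin n → ℤ) (d : Fin r → ℤ) (S : Finset (Fin r))
    (P : Set (Fin n → ℝ))
    (hP : P = {u : Fin n → ℝ |
        (∀ i, i ∈ S → ∑ j, u j * (v i j : ℝ) < -(d i : ℝ)) ∧
        (∀ i, i ∉ S → -(d i : ℝ) ≤ ∑ j, u j * (v i j : ℝ))})
    (hbdd : Bornology.IsBounded P) :
    Tendsto
      (fun m : ℕ =>
        (Nat.card {u : Fin n → ℤ | (fun j => (u j : ℝ)) ∈ (m : ℝ) • P} : ℝ) /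
          ((m : ℝ) ^ n / (n.factorial : ℝ)))
      atTop (𝓝 ((n.factorial : ℝ) * (volume P).toReal)) := by
  classical
  have hcont : ∀ i : Fin r, Continuous (fun u : Fin n → ℝ => ∑ j, u j * (v i j : ℝ)) :=
    fun i => continuous_finset_sum _ fun j _ => (continuous_apply j).mul continuous_const
  set C : Fin r → Set (Fin n → ℝ) := fun i =>
    if i ∈ S then {u | ∑ j, u j * (v i j : ℝ) < -(d i : ℝ)}
    else {u | -(d i : ℝ) ≤ ∑ j, u j * (v i j : ℝ)} with hC
  have hPC : P = ⋂ i, C i := by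
    rw [hP]; ext u
    simp only [Set.mem_iInter, Set.mem_setOf_eq, hC]
    constructor
    · rintro ⟨h1, h2⟩ i
      by_cases hi : i ∈ S
      · simpa [hi] using h1 i hi
      · simpa [hi] using h2 i hi
    · intro h
      refine ⟨fun i hi => ?_, fun i hi => ?_⟩
      · have := h i; simpa [hi] using this
      · have := h i; simpa [hi] using this
  have hCmeas : ∀ i, MeasurableSet (C i) := by
    intro i
    rw [hC]
    by_cases hi : i ∈ S
    · simp only [if_pos hi]
      exact measurableSet_lt (hcont i).measurable measurable_const
    · simp only [if_neg hi]
      exact measurableSet_le measurable_const (hcont i).measurable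
  have hmeas : MeasurableSet P := hPC ▸ MeasurableSet.iInter hCmeas
  have hfrC : ∀ i, volume (frontier (C i)) = 0 := by
    intro i
    by_cases hv : v i = 0
    · have hzero : C i = Set.univ ∨ C i = ∅ := by
        simp only [hC]
        by_cases hi : i ∈ S
        · simp only [if_pos hi]
          by_cases h0 : (0 : ℝ) < -(d i : ℝ)
          · left; ext u; simp [hv, h0]
          · right; ext u; simp [hv, h0]
        · simp only [if_neg hi]
          by_cases h0 : -(d i : ℝ) ≤ 0
          · left; ext u; simp [hv, h0]
          · right; ext u; simp [hv, h0]
      rcases hzero with h | h <;> rw [h] <;> simp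
    · have hsub : frontier (C i) ⊆ {u : Fin n → ℝ | ∑ j, u j * (v i j : ℝ) = -(d i : ℝ)} := by
        rw [hC]
        by_cases hi : i ∈ S
        · simp only [if_pos hi]
          exact frontier_lt_subset_eq (hcont i) continuous_const
        · simp only [if_neg hi]
          exact fun x hx => (frontier_le_subset_eq continuous_const (hcont i) hx).symm
      exact measure_mono_null hsub (hyperplane_null n (v i) hv _)
  have hfront : volume (frontier P) = 0 := by
    have hsub : frontier P ⊆ ⋃ i, frontier (C i) := by
      rw [hPC]
      intro x hx
      have h1 : x ∈ closure (⋂ i, C i) := hx.1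
      have h2 : x ∉ interior (⋂ i, C i) := hx.2
      rw [interior_iInter_of_finite] at h2
      simp only [Set.mem_iInter, not_forall] at h2
      obtain ⟨i, hi⟩ := h2
      exact Set.mem_iUnion.mpr ⟨i, ⟨closure_mono (Set.iInter_subset C i) h1, hi⟩⟩
    exact measure_mono_null hsub (measure_iUnion_null fun i => hfrC i)
  have hmain := (count_tendsto n P hmeas hbdd hfront).const_mul ((n.factorial : ℝ))
  refine hmain.congr fun m => ?_
  rw [div_div_eq_mul_div]
  ring
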